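/- Let M be an irreducible affine algebraic monoid with unit group G and let H ⊆ G be a subgroup, closed in M. Then the following are equivalent: (1) H is observable in M; (2) E_M(H) is a group, i.e. for every ρ ∈ E_M(H) also ρ^{-1} ∈ E_M(H); (3) E_M(H) = X(H), i.e. every rational character of H is extendible to M. -/

import Mathlib

open MvPolynomial

namespace AlgebraicMonoid

variable (k : Type) [Field k] [IsAlgClosed k] (n : ℕ)

/-- `n × n` matrices over `k`: the ambient affine space for linear algebraic monoids. -/
abbrev Mat := Matrix (Fin n) (Fin n) k

/-- Polynomial functions on the space of `n × n` matrices. -/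
abbrev MPoly := MvPolynomial (Fin n × Fin n) k

variable {k n}

/-- Evaluation of a polynomial at a matrix. -/
noncomputable def mEval (x : Mat k n) (p : MPoly k n) : k :=
  eval (fun ij => x ij.1 ij.2) p

/-- The (regular function induced by) `p` vanishes identically on `X`. -/
def VanishesOn (X : Set (Mat k n)) (p : MPoly k n) : Prop :=
  ∀ x ∈ X, mEval x p = 0

/-- Zariski closed subsets of matrix space. -/
def ZClosed (X : Set (Mat k n)) : Prop :=
  ∃ S : Set (MPoly k n), X = {x | ∀ p ∈ S, mEval x p = 0}

/-- An affine (linear) algebraic monoid, realized as a Zariski closed submonoid of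
matrix space (every affine algebraic monoid admits such a closed embedding). -/
structure IsAlgMonoid (M : Set (Mat k n)) : Prop where
  zclosed : ZClosed M
  one_mem : (1 : Mat k n) ∈ M
  mul_mem : ∀ a ∈ M, ∀ b ∈ M, a * b ∈ M

/-- The unit group `G(M)` of the monoid `M`. -/
def unitGroup (M : Set (Mat k n)) : Set (Mat k n) :=
  {g | g ∈ M ∧ ∃ h ∈ M, g * h = 1 ∧ h * g = 1}

/-- `H` is an (abstract) subgroup of `G`. -/
def IsSubgroupOf (H G : Set (Mat k n)) : Prop :=
  H ⊆ G ∧ (1 : Mat k n) ∈ H ∧ (∀ a ∈ H, ∀ b ∈ H, a * b ∈ H) ∧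
    ∀ a ∈ H, ∃ b ∈ H, a * b = 1 ∧ b * a = 1

/-- `Y` is closed in `X` (for the Zariski topology). -/
def IsClosedIn (Y X : Set (Mat k n)) : Prop :=
  Y ⊆ X ∧ ∃ C : Set (Mat k n), ZClosed C ∧ Y = C ∩ X

/-- `X` is irreducible: nonempty, and its vanishing ideal is prime. -/
def IrreducibleSet (X : Set (Mat k n)) : Prop :=
  X.Nonempty ∧ ∀ p q : MPoly k n, VanishesOn X (p * q) → VanishesOn X p ∨ VanishesOn X q

/-- The action of `H` on `M` by left multiplication is observable: every nonzero
`H`-stable ideal of `k[M]` (presented as an ideal of the polynomial ring containing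
the vanishing ideal of `M`) contains a nonzero `H`-invariant function.
Here `H` acts on `k[M]` by `(f · h)(m) = f (h * m)`. -/
def LeftObservable (H M : Set (Mat k n)) : Prop :=
  ∀ J : Ideal (MPoly k n),
    (∀ p : MPoly k n, VanishesOn M p → p ∈ J) →
    (∀ p ∈ J, ∀ h ∈ H, ∃ p' ∈ J, ∀ m ∈ M, mEval m p' = mEval (h * m) p) →
    (∃ p ∈ J, ¬ VanishesOn M p) →
    ∃ p ∈ J, (¬ VanishesOn M p) ∧ ∀ h ∈ H, ∀ m ∈ M, mEval (h * m) p = mEval m p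

/-- `χ` defines a character of (the monoid) `X`, i.e. a regular multiplicative map to `k`. -/
structure IsCharacterOn (X : Set (Mat k n)) (χ : MPoly k n) : Prop where
  map_one : mEval 1 χ = 1
  map_mul : ∀ a ∈ X, ∀ b ∈ X, mEval (a * b) χ = mEval a χ * mEval b χ

/-- The character `χ` of `H` is extendible to `M`: there is a nonzero
`H`-semiinvariant `f ∈ k[M]` of weight `χ`, i.e. `f(h m) = χ(h) f(m)`. -/
def Extendible (M H : Set (Mat k n)) (χ : MPoly k n) : Prop :=
  ∃ f : MPoly k n, (¬ VanishesOn M f) ∧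
    ∀ h ∈ H, ∀ m ∈ M, mEval (h * m) f = mEval h χ * mEval m f

/-- The matrix of regular functions `P` evaluated at `x`: a rational representation. -/
noncomputable def repApply {d : ℕ} (P : Matrix (Fin d) (Fin d) (MPoly k n)) (x : Mat k n) :
    Matrix (Fin d) (Fin d) k :=
  Matrix.of fun i j => mEval x (P i j)

/-- `P` defines a (finite dimensional rational) right `M`-module structure on `k^d`,
the action being `v · x = v ᵥ* (P x)`. -/
def IsRightRep {d : ℕ} (M : Set (Mat k n)) (P : Matrix (Fin d) (Fin d) (MPoly k n)) : Prop :=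
  repApply P 1 = 1 ∧ ∀ a ∈ M, ∀ b ∈ M, repApply P (a * b) = repApply P a * repApply P b



set_option linter.unusedSectionVars false
set_option maxHeartbeats 1000000


-- ring hom facts
lemma mEval_add (x : Mat k n) (p q : MPoly k n) : mEval x (p + q) = mEval x p + mEval x q := by
  simp [mEval]

lemma mEval_mul (x : Mat k n) (p q : MPoly k n) : mEval x (p * q) = mEval x p * mEval x q := by
  simp [mEval]

lemma mEval_smul (x : Mat k n) (c : k) (p : MPoly k n) : mEval x (c • p) = c * mEval x p := by
  simp [mEval, smul_eval]

lemma mEval_one (x : Mat k n) : mEval x (1 : MPoly k n) = 1 := by simp [mEval]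

lemma mEval_C (x : Mat k n) (c : k) : mEval x (C c : MPoly k n) = c := by simp [mEval]

lemma mEval_sub (x : Mat k n) (p q : MPoly k n) : mEval x (p - q) = mEval x p - mEval x q := by
  simp [mEval]

lemma mEval_sum {ι : Type*} (x : Mat k n) (s : Finset ι) (f : ι → MPoly k n) :
    mEval x (∑ i ∈ s, f i) = ∑ i ∈ s, mEval x (f i) := by
  simp [mEval]

/-- evaluation as a ring hom -/
noncomputable def mEvalHom (x : Mat k n) : MPoly k n →+* k :=
  eval₂Hom (RingHom.id k) (fun ij => x ij.1 ij.2)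

lemma mEvalHom_apply (x : Mat k n) (p : MPoly k n) : mEvalHom x p = mEval x p := by
  rfl

/-- The vanishing ideal of a set. -/
noncomputable def vI (X : Set (Mat k n)) : Ideal (MPoly k n) where
  carrier := {p | VanishesOn X p}
  add_mem' := fun {p} {q} hp hq x hx => by rw [mEval_add, hp x hx, hq x hx, add_zero]
  zero_mem' := fun x _ => by simp [mEval]
  smul_mem' := fun c p hp x hx => by
    rw [smul_eq_mul, mEval_mul, hp x hx, mul_zero]

lemma mem_vI {X : Set (Mat k n)} {p : MPoly k n} : p ∈ vI X ↔ VanishesOn X p := Iff.rfl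

/-- left translation of a polynomial: `mEval x (lT h p) = mEval (h*x) p` -/
noncomputable def lT (h : Mat k n) (p : MPoly k n) : MPoly k n :=
  bind₁ (fun ij => ∑ l, C (h ij.1 l) * X (l, ij.2)) p

/-- right translation: `mEval x (rT z p) = mEval (x*z) p` -/
noncomputable def rT (z : Mat k n) (p : MPoly k n) : MPoly k n :=
  bind₁ (fun ij => ∑ l, C (z l ij.2) * X (ij.1, l)) p

lemma eval_bind₁' (f : (Fin n × Fin n) → k) (g : (Fin n × Fin n) → MPoly k n) (p : MPoly k n) :
    eval f (bind₁ g p) = eval (fun i => eval f (g i)) p := by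
  simpa using eval₂Hom_bind₁ (RingHom.id k) f g p

lemma mEval_lT (h x : Mat k n) (p : MPoly k n) : mEval x (lT h p) = mEval (h * x) p := by
  unfold mEval lT
  rw [eval_bind₁']
  have hfg : (fun i : Fin n × Fin n => (eval fun ij => x ij.1 ij.2) (∑ l, C (h i.1 l) * X (l, i.2)))
      = fun ij => (h * x) ij.1 ij.2 := by
    funext ij; simp [Matrix.mul_apply]
  rw [hfg]

lemma mEval_rT (z x : Mat k n) (p : MPoly k n) : mEval x (rT z p) = mEval (x * z) p := by
  unfold mEval rT
  rw [eval_bind₁']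
  have hfg : (fun i : Fin n × Fin n => (eval fun ij => x ij.1 ij.2) (∑ l, C (z l i.2) * X (i.1, l)))
      = fun ij => (x * z) ij.1 ij.2 := by
    funext ij
    rw [Matrix.mul_apply]
    simp [mul_comm]
  rw [hfg]

/-- comultiplication: polynomial at a product splits as finite sum of products -/
lemma comul (p : MPoly k n) : ∃ (D : ℕ) (c d : Fin D → MPoly k n), ∀ x y : Mat k n,
    mEval (x * y) p = ∑ α, mEval x (c α) * mEval y (d α) := by
  induction p using MvPolynomial.induction_on with
  | C a =>
    refine ⟨1, fun _ => C a, fun _ => 1, fun x y => ?_⟩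
    simp [mEval]
  | add p q hp hq =>
    obtain ⟨D1, c1, d1, h1⟩ := hp
    obtain ⟨D2, c2, d2, h2⟩ := hq
    refine ⟨D1 + D2, Fin.append c1 c2, Fin.append d1 d2, fun x y => ?_⟩
    rw [mEval_add, h1, h2, Fin.sum_univ_add]
    simp
  | mul_X p s hp =>
    obtain ⟨D, c, d, h⟩ := hp
    refine ⟨D * n, fun t => c (finProdFinEquiv.symm t).1 * X (s.1, (finProdFinEquiv.symm t).2),
      fun t => d (finProdFinEquiv.symm t).1 * X ((finProdFinEquiv.symm t).2, s.2), fun x y => ?_⟩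
    rw [mEval_mul, h]
    have hxy : mEval (x * y) (X s) = ∑ l, mEval x (X ((s.1 : Fin n), l)) * mEval y (X ((l : Fin n), (s.2 : Fin n))) := by
      simp [mEval, Matrix.mul_apply]
    rw [hxy, Finset.sum_mul_sum]
    rw [← Equiv.sum_comp (finProdFinEquiv : Fin D × Fin n ≃ Fin (D * n))]
    rw [Fintype.sum_prod_type]
    apply Finset.sum_congr rfl; intro α _
    apply Finset.sum_congr rfl; intro l _
    simp only [Equiv.symm_apply_apply, mEval_mul]
    ring




/-- evaluation on points of `M` as a linear map into functions on `M` -/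
noncomputable def evM (M : Set (Mat k n)) : MPoly k n →ₗ[k] (M → k) where
  toFun p := fun m => mEval m p
  map_add' p q := by funext m; simp [mEval]
  map_smul' c p := by funext m; simp [mEval_smul]

lemma evM_apply (M : Set (Mat k n)) (p : MPoly k n) (m : M) : evM M p m = mEval m p := rfl

/-- Gram points: linearly independent functions admit points where the evaluation
matrix is invertible. -/
lemma gram {X : Type} : ∀ {d : ℕ} (g : Fin d → (X → k)), LinearIndependent k g →
    ∃ x : Fin d → X, IsUnit (Matrix.of fun i j => g i (x j)).det := by
  intro d
  induction d with
  | zero =>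
    intro g hg
    exact ⟨Fin.elim0, by simp [Matrix.det_fin_zero]⟩
  | succ e ih =>
    intro g hg
    have htail : LinearIndependent k (fun i : Fin e => g i.succ) :=
      hg.comp Fin.succ (Fin.succ_injective e)
    obtain ⟨y, hy⟩ := ih _ htail
    by_contra hcon
    push_neg at hcon
    set Mi : Fin (e+1) → Matrix (Fin e) (Fin e) k :=
      fun i => Matrix.of fun i' j' => g (i.succAbove i') (y j') with hMi
    have hdet0 : ∀ x0 : X, ∑ i : Fin (e+1), (-1 : k)^(i : ℕ) * g i x0 * (Mi i).det = 0 := by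
      intro x0
      have h1 := hcon (Fin.cases x0 y)
      have h2 : (Matrix.of fun i j => g i ((Fin.cases x0 y : Fin (e+1) → X) j)).det = 0 := by
        by_contra hne
        exact h1 (isUnit_iff_ne_zero.mpr hne)
      rw [Matrix.det_succ_column_zero] at h2
      rw [← h2]
      apply Finset.sum_congr rfl
      intro i _
      have e1 : (Matrix.of (fun i j => g i ((Fin.cases x0 y : Fin (e+1) → X) j)) : Matrix (Fin (e+1)) (Fin (e+1)) k) i 0 = g i x0 := by
        simp
      have e2 : ((Matrix.of fun i j => g i ((Fin.cases x0 y : Fin (e+1) → X) j)).submatrix i.succAbove Fin.succ) = Mi i := by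
        funext i' j'
        simp [hMi, Matrix.submatrix_apply]
      rw [e1, e2]
    set c : Fin (e+1) → k := fun i => (-1 : k)^(i : ℕ) * (Mi i).det with hc
    have hzero : ∑ i, c i • g i = 0 := by
      funext x0
      simp only [Finset.sum_apply, Pi.smul_apply, smul_eq_mul, Pi.zero_apply]
      rw [← hdet0 x0]
      apply Finset.sum_congr rfl
      intro i _
      ring
    have hci := Fintype.linearIndependent_iff.mp hg c hzero 0
    have hM0 : Mi 0 = Matrix.of fun i j => (fun i : Fin e => g i.succ) i (y j) := by
      funext i' j'
      simp [hMi, Fin.succAbove_zero]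
    rw [hc] at hci
    simp only [Fin.val_zero, pow_zero, one_mul] at hci
    rw [hM0] at hci
    exact (isUnit_iff_ne_zero.mp hy) hci




lemma zclosed_inter {X Y : Set (Mat k n)} (hX : ZClosed X) (hY : ZClosed Y) :
    ZClosed (X ∩ Y) := by
  obtain ⟨S, hS⟩ := hX
  obtain ⟨T, hT⟩ := hY
  refine ⟨S ∪ T, ?_⟩
  ext x
  simp only [Set.mem_inter_iff, hS, hT, Set.mem_setOf_eq, Set.mem_union]
  constructor
  · rintro ⟨h1, h2⟩ p (hp | hp)
    · exact h1 p hp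
    · exact h2 p hp
  · intro h
    exact ⟨fun p hp => h p (Or.inl hp), fun p hp => h p (Or.inr hp)⟩

lemma zclosed_recover {X : Set (Mat k n)} (hX : ZClosed X) (x : Mat k n)
    (hx : ∀ p, VanishesOn X p → mEval x p = 0) : x ∈ X := by
  obtain ⟨S, hS⟩ := hX
  rw [hS]
  intro p hp
  apply hx
  intro y hy
  rw [hS] at hy
  exact hy p hp

/-- Nullstellensatz application: a function nonvanishing on a Zariski closed set is
invertible on it. -/
lemma exists_inv_on {X : Set (Mat k n)} (hX : ZClosed X) (ρ : MPoly k n)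
    (hρ : ∀ x ∈ X, mEval x ρ ≠ 0) : ∃ ρ', ∀ x ∈ X, mEval x ρ * mEval x ρ' = 1 := by
  classical
  set φ : Mat k n → ((Fin n × Fin n) → k) := fun x ij => x ij.1 ij.2 with hφ
  set X' : Set ((Fin n × Fin n) → k) := φ '' X with hX'
  set I : Ideal (MPoly k n) := MvPolynomial.vanishingIdeal k X' ⊔ Ideal.span {ρ} with hI
  have hzl : MvPolynomial.zeroLocus k I = ∅ := by
    ext y
    simp only [Set.mem_empty_iff_false, iff_false]
    intro hy
    rw [MvPolynomial.mem_zeroLocus_iff] at hy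
    obtain ⟨S, hS⟩ := hX
    set x : Mat k n := Matrix.of (fun i j => y (i, j)) with hx
    have hφx : φ x = y := by
      funext ij
      simp [hφ, hx]
    have hxX : x ∈ X := by
      rw [hS]
      intro p hp
      have hpI : p ∈ I := by
        apply Ideal.mem_sup_left
        rw [MvPolynomial.mem_vanishingIdeal_iff]
        rintro z ⟨w, hw, rfl⟩
        have : w ∈ {x | ∀ p ∈ S, mEval x p = 0} := hS ▸ hw
        exact this p hp
      have := hy p hpI
      rw [← hφx] at this
      exact this
    have hyρ := hy ρ (Ideal.mem_sup_right (Ideal.subset_span rfl))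
    rw [← hφx] at hyρ
    exact hρ x hxX hyρ
  have hrad : I.radical = ⊤ := by
    rw [← MvPolynomial.vanishingIdeal_zeroLocus_eq_radical (K := k), hzl]
    rw [eq_top_iff]
    intro p _
    rw [MvPolynomial.mem_vanishingIdeal_iff]
    intro x hx
    exact absurd hx (Set.notMem_empty x)
  have hItop : I = ⊤ := Ideal.radical_eq_top.mp hrad
  have h1 : (1 : MPoly k n) ∈ I := hItop ▸ Submodule.mem_top
  rw [hI] at h1
  obtain ⟨a, ha, b, hb, hab⟩ := Submodule.mem_sup.mp h1
  obtain ⟨g, hg⟩ := Ideal.mem_span_singleton'.mp hb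
  refine ⟨g, fun x hx => ?_⟩
  have h1x : mEval x (a + b) = 1 := by rw [hab]; simp [mEval]
  have hax : mEval x a = 0 := by
    rw [MvPolynomial.mem_vanishingIdeal_iff] at ha
    exact ha (φ x) ⟨x, hx, rfl⟩
  rw [show mEval x (a + b) = mEval x a + mEval x b from by simp [mEval]] at h1x
  rw [hax, zero_add, ← hg] at h1x
  rw [show mEval x (g * ρ) = mEval x g * mEval x ρ from mEval_mul x g ρ] at h1x
  rw [mul_comm] at h1x
  exact h1x.symm ▸ h1x

/-- Elements of `M` that are invertible as matrices are units of the monoid `M`. -/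
lemma unit_mem {M : Set (Mat k n)} (hM : IsAlgMonoid M) (m : Mat k n) (hm : m ∈ M)
    (hdet : m.det ≠ 0) : ∃ w ∈ M, m * w = 1 ∧ w * m = 1 := by
  have hu : IsUnit m := (Matrix.isUnit_iff_isUnit_det m).mpr (isUnit_iff_ne_zero.mpr hdet)
  obtain ⟨u, hum⟩ := hu
  set C : ℕ → Set (Mat k n) := fun j => {x | (↑(u⁻¹ ^ j) : Mat k n) * x ∈ M} with hC
  have hCdec : ∀ j, C (j + 1) ⊆ C j := by
    intro j x hx
    have hx' : (↑(u⁻¹ ^ (j+1)) : Mat k n) * x ∈ M := hx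
    have key : (↑(u⁻¹ ^ j) : Mat k n) * x = m * ((↑(u⁻¹ ^ (j+1)) : Mat k n) * x) := by
      rw [← mul_assoc, ← hum, ← Units.val_mul]
      congr 1
      rw [show u * u⁻¹ ^ (j+1) = (u * u⁻¹ ^ (j+1) : (Mat k n)ˣ) from rfl]
      congr 1
      rw [pow_succ']
      rw [← mul_assoc, mul_inv_cancel, one_mul]
    rw [hC]
    simp only [Set.mem_setOf_eq]
    rw [key]
    exact hM.mul_mem m hm _ hx'
  have hCanti : ∀ j j', j ≤ j' → C j' ⊆ C j := by
    intro j j' hle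
    induction hle with
    | refl => exact fun x hx => hx
    | step h ih => exact fun x hx => ih (hCdec _ hx)
  have hCz : ∀ j, ZClosed (C j) := by
    intro j
    obtain ⟨S, hS⟩ := hM.zclosed
    refine ⟨lT (↑(u⁻¹ ^ j)) '' S, ?_⟩
    ext x
    simp only [hC, Set.mem_setOf_eq, hS]
    constructor
    · rintro h p ⟨q, hq, rfl⟩
      rw [mEval_lT]
      exact h q hq
    · intro h q hq
      have := h (lT (↑(u⁻¹ ^ j)) q) ⟨q, hq, rfl⟩
      rwa [mEval_lT] at this
  -- vanishing ideals chain
  set f : ℕ →o Ideal (MPoly k n) :=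
    ⟨fun j => { carrier := {p | VanishesOn (C j) p},
                add_mem' := fun {p} {q} hp hq x hx => by
                  rw [show mEval x (p + q) = mEval x p + mEval x q from by simp [mEval],
                    hp x hx, hq x hx, add_zero],
                zero_mem' := fun x _ => by simp [mEval],
                smul_mem' := fun c p hp x hx => by
                  rw [smul_eq_mul, mEval_mul, hp x hx, mul_zero] },
      fun j j' hle p hp x hx => hp x (hCanti j j' hle hx)⟩ with hf
  have hstab := monotone_stabilizes_iff_noetherian.mpr
    (inferInstance : IsNoetherian (MPoly k n) (MPoly k n)) f
  obtain ⟨N, hN⟩ := hstab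
  -- C N ⊆ C (N+1)
  have hsub : C N ⊆ C (N + 1) := by
    intro x hx
    apply zclosed_recover (hCz (N + 1)) x
    intro p hp
    have hpN : p ∈ f N := by
      rw [hN (N + 1) (Nat.le_succ N)]
      exact hp
    exact hpN x hx
  -- u^N ∈ C N
  have hmem : (↑(u ^ N) : Mat k n) ∈ C N := by
    rw [hC]
    simp only [Set.mem_setOf_eq]
    rw [← Units.val_mul]
    simp only [inv_pow]
    rw [inv_mul_cancel]
    simpa using hM.one_mem
  have hmem' := hsub hmem
  rw [hC] at hmem'
  simp only [Set.mem_setOf_eq] at hmem'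
  have hw : (↑(u⁻¹ ^ (N+1)) : Mat k n) * (↑(u ^ N) : Mat k n) = (↑u⁻¹ : Mat k n) := by
    rw [← Units.val_mul]
    congr 1
    rw [pow_succ']
    rw [mul_assoc]
    simp [inv_pow, inv_mul_cancel]
  rw [hw] at hmem'
  refine ⟨↑u⁻¹, hmem', ?_, ?_⟩
  · rw [← hum, ← Units.val_mul, mul_inv_cancel, Units.val_one]
  · rw [← hum, ← Units.val_mul, inv_mul_cancel, Units.val_one]

/-- density of units: a nonvanishing function on irreducible `M` is nonzero at an
invertible point. -/
lemma exists_unit_point {M : Set (Mat k n)} (hM : IsAlgMonoid M) (hMirr : IrreducibleSet M)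
    (p : MPoly k n) (hp : ¬ VanishesOn M p) :
    ∃ g ∈ M, mEval g p ≠ 0 ∧ ∃ w ∈ M, g * w = 1 ∧ w * g = 1 := by
  classical
  set detP : MPoly k n := (Matrix.of fun i j => (X (i, j) : MPoly k n)).det with hdetP
  have hdeval : ∀ x : Mat k n, mEval x detP = x.det := by
    intro x
    rw [hdetP]
    have := (RingHom.map_det (eval₂Hom (RingHom.id k) (fun ij : Fin n × Fin n => x ij.1 ij.2))
      (Matrix.of fun i j => (X (i, j) : MPoly k n)))
    rw [show mEval x (Matrix.of fun i j => (X (i, j) : MPoly k n)).det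
        = (eval₂Hom (RingHom.id k) (fun ij : Fin n × Fin n => x ij.1 ij.2))
          (Matrix.of fun i j => (X (i, j) : MPoly k n)).det from rfl, this]
    congr 1
    funext i j
    simp [mEval]
  have hdet : ¬ VanishesOn M detP := by
    intro hv
    have := hv 1 hM.one_mem
    rw [hdeval] at this
    simp at this
  have hpd : ¬ VanishesOn M (p * detP) := by
    intro hv
    rcases hMirr.2 p detP hv with h | h
    · exact hp h
    · exact hdet h
  rw [VanishesOn] at hpd
  push_neg at hpd
  obtain ⟨g, hgM, hg⟩ := hpd
  rw [mEval_mul] at hg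
  have hg1 : mEval g p ≠ 0 := fun h => hg (by rw [h, zero_mul])
  have hg2 : g.det ≠ 0 := by
    intro h
    apply hg
    rw [hdeval g, h, mul_zero]
  obtain ⟨w, hwM, hw⟩ := unit_mem hM g hgM hg2
  exact ⟨g, hgM, hg1, w, hwM, hw⟩




/-- uniqueness of representing matrices -/
lemma rel_unique {M : Set (Mat k n)} {d : ℕ} (q : Fin d → MPoly k n)
    (hind : LinearIndependent k (fun i => evM M (q i)))
    {A A' : Matrix (Fin d) (Fin d) k}
    (hAA : ∀ i, ∀ m ∈ M, (∑ j, A i j * mEval m (q j)) = ∑ j, A' i j * mEval m (q j)) :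
    A = A' := by
  funext i j
  have hrow : ∀ i, (fun j => A i j - A' i j) = 0 := by
    intro i
    have hz : ∑ j, (A i j - A' i j) • (evM M (q j)) = 0 := by
      funext m
      simp only [Finset.sum_apply, Pi.smul_apply, smul_eq_mul, Pi.zero_apply, evM_apply]
      have := hAA i m m.2
      have expand : ∑ j, (A i j - A' i j) * mEval m (q j)
          = (∑ j, A i j * mEval (↑m) (q j)) - ∑ j, A' i j * mEval (↑m) (q j) := by
        rw [← Finset.sum_sub_distrib]
        apply Finset.sum_congr rfl
        intro j _
        ring
      rw [expand, this, sub_self]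
    have := Fintype.linearIndependent_iff.mp hind _ hz
    funext j
    exact this j
  have := congrFun (hrow i) j
  simpa [sub_eq_zero] using this

/-- The main representation construction: from an `H`-stable independent family of
functions on `M`, extract a rational character of `H` (the determinant of the
representation) together with an extendibility witness. -/
lemma repdata {M H : Set (Mat k n)} (hM : IsAlgMonoid M)
    (hHsub : H ⊆ M) (hHone : (1 : Mat k n) ∈ H)
    (hHmul : ∀ a ∈ H, ∀ b ∈ H, a * b ∈ H)
    {d : ℕ} (q : Fin d → MPoly k n)
    (hind : LinearIndependent k (fun i => evM M (q i)))
    (hstab : ∀ h ∈ H, ∀ i, evM M (lT h (q i)) ∈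
      Submodule.span k (Set.range (fun i => evM M (q i)))) :
    ∃ (pts : Fin d → Mat k n) (A : Mat k n → Matrix (Fin d) (Fin d) k) (χ u : MPoly k n),
      (∀ j, pts j ∈ M) ∧
      IsUnit (Matrix.of fun i j => mEval (pts j) (q i)).det ∧
      (∀ h ∈ H, ∀ i, ∀ m ∈ M, mEval (h * m) (q i) = ∑ j, A h i j * mEval m (q j)) ∧
      (∀ h ∈ H, mEval h χ = (A h).det) ∧
      IsCharacterOn H χ ∧
      (¬ VanishesOn M u) ∧
      (∀ h ∈ H, ∀ m ∈ M, mEval (h * m) u = mEval h χ * mEval m u) := by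
  classical
  -- Gram points
  obtain ⟨x, hx⟩ := gram (fun i => evM M (q i)) hind
  set pts : Fin d → Mat k n := fun j => ↑(x j) with hpts
  have hptsM : ∀ j, pts j ∈ M := fun j => (x j).2
  set F : Matrix (Fin d) (Fin d) k := Matrix.of fun i j => mEval (pts j) (q i) with hF
  have hFunit : IsUnit F.det := hx
  -- representing matrices
  set A : Mat k n → Matrix (Fin d) (Fin d) k := fun h => Matrix.of fun i j =>
    if hh : h ∈ H then
      Classical.choose ((Submodule.mem_span_range_iff_exists_fun k).mp (hstab h hh i)) j
    else 0 with hA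
  have hREL : ∀ h ∈ H, ∀ i, ∀ m ∈ M, mEval (h * m) (q i) = ∑ j, A h i j * mEval m (q j) := by
    intro h hh i m hm
    have hspec := Classical.choose_spec ((Submodule.mem_span_range_iff_exists_fun k).mp (hstab h hh i))
    have := congrFun hspec ⟨m, hm⟩
    simp only [Finset.sum_apply, Pi.smul_apply, smul_eq_mul, evM_apply] at this
    rw [mEval_lT] at this
    rw [← this]
    apply Finset.sum_congr rfl
    intro j _
    congr 1
    rw [hA]
    simp only [Matrix.of_apply]
    rw [dif_pos hh]
  -- A is multiplicative on H
  have hA1 : A 1 = 1 := by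
    apply rel_unique q hind
    intro i m hm
    have h1 : ∀ j, (1 : Matrix (Fin d) (Fin d) k) i j * mEval m (q j)
        = (if i = j then mEval m (q j) else 0) := by
      intro j
      by_cases hij : i = j <;> simp [Matrix.one_apply, hij]
    have := hREL 1 hHone i m hm
    rw [one_mul] at this
    rw [← this]
    rw [Finset.sum_congr rfl (fun j _ => h1 j), Finset.sum_ite_eq (Finset.univ) i
      (fun j => mEval m (q j))]
    simp
  have hAmul : ∀ a ∈ H, ∀ b ∈ H, A (a * b) = A a * A b := by
    intro a ha b hb
    apply rel_unique q hind
    intro i m hm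
    have lhs : ∑ j, A (a * b) i j * mEval m (q j) = mEval ((a * b) * m) (q i) :=
      (hREL (a*b) (hHmul a ha b hb) i m hm).symm
    rw [lhs, mul_assoc]
    have hbm : b * m ∈ M := hM.mul_mem b (hHsub hb) m hm
    rw [hREL a ha i (b * m) hbm]
    have : ∀ j, A a i j * mEval (b * m) (q j) = A a i j * ∑ l, A b j l * mEval m (q l) := by
      intro j
      rw [hREL b hb j m hm]
    rw [Finset.sum_congr rfl (fun j _ => this j)]
    have step1 : ∑ j, A a i j * ∑ l, A b j l * mEval m (q l)
        = ∑ j, ∑ l, A a i j * (A b j l * mEval m (q l)) := by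
      apply Finset.sum_congr rfl; intro j _; rw [Finset.mul_sum]
    rw [step1, Finset.sum_comm]
    apply Finset.sum_congr rfl
    intro l _
    rw [Matrix.mul_apply, Finset.sum_mul]
    apply Finset.sum_congr rfl
    intro j _
    ring
  -- χ and u
  set u : MPoly k n := (Matrix.of fun i j => rT (pts j) (q i)).det with hu
  set χ : MPoly k n := (F.det)⁻¹ • u with hχ
  have huval : ∀ m : Mat k n, mEval m u = (Matrix.of fun i j => mEval (m * pts j) (q i)).det := by
    intro m
    rw [hu, ← mEvalHom_apply, RingHom.map_det]
    congr 1
    funext i j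
    simp only [RingHom.mapMatrix_apply, Matrix.map_apply, Matrix.of_apply]
    rw [mEvalHom_apply, mEval_rT]
  have hBval : ∀ h ∈ H, (Matrix.of fun i j => mEval (h * pts j) (q i)) = A h * F := by
    intro h hh
    funext i j
    rw [Matrix.mul_apply]
    simp only [Matrix.of_apply]
    rw [hREL h hh i (pts j) (hptsM j)]
    apply Finset.sum_congr rfl
    intro l _
    rw [hF]
    simp
  have hχval : ∀ h ∈ H, mEval h χ = (A h).det := by
    intro h hh
    rw [hχ, mEval_smul, huval, hBval h hh, Matrix.det_mul]
    rw [mul_comm ((A h).det), ← mul_assoc, inv_mul_cancel₀ hFunit.ne_zero, one_mul]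
  have hchar : IsCharacterOn H χ := by
    constructor
    · rw [hχval 1 hHone, hA1, Matrix.det_one]
    · intro a ha b hb
      rw [hχval _ (hHmul a ha b hb), hχval a ha, hχval b hb, hAmul a ha b hb, Matrix.det_mul]
  have hext : ∀ h ∈ H, ∀ m ∈ M, mEval (h * m) u = mEval h χ * mEval m u := by
    intro h hh m hm
    rw [huval, huval, hχval h hh]
    have : (Matrix.of fun i j => mEval ((h * m) * pts j) (q i))
        = A h * (Matrix.of fun i j => mEval (m * pts j) (q i)) := by
      funext i j
      rw [Matrix.mul_apply]
      simp only [Matrix.of_apply]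
      rw [mul_assoc]
      rw [hREL h hh i (m * pts j) (hM.mul_mem m hm _ (hptsM j))]
    rw [this, Matrix.det_mul]
  have hnv : ¬ VanishesOn M u := by
    intro hv
    have := hv 1 hM.one_mem
    rw [huval] at this
    have hone : (Matrix.of fun i j => mEval ((1 : Mat k n) * pts j) (q i)) = F := by
      funext i j
      rw [hF]
      simp
    rw [hone] at this
    exact hFunit.ne_zero this
  exact ⟨pts, A, χ, u, hptsM, hFunit, hREL, hχval, hchar, hnv, hext⟩


-- ==================== observability lemmas ====================

/-- a determinant with a column inside an ideal lies in the ideal -/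
lemma det_mem_ideal {R : Type*} [CommRing R] {d : ℕ} (J : Ideal R)
    (P : Matrix (Fin d) (Fin d) R) (j₀ : Fin d) (h : ∀ i, P i j₀ ∈ J) : P.det ∈ J := by
  rw [Matrix.det_apply']
  apply Ideal.sum_mem
  intro σ _
  apply Ideal.mul_mem_left
  rw [← Finset.prod_erase_mul (Finset.univ) _ (Finset.mem_univ j₀)]
  exact Ideal.mul_mem_left J _ (h (σ j₀))

/-- inverse character via the Nullstellensatz -/
lemma inv_char {M H : Set (Mat k n)} (hM : IsAlgMonoid M)
    (hH : IsSubgroupOf H (unitGroup M)) (hHcl : IsClosedIn H M)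
    (ρ : MPoly k n) (hρ : IsCharacterOn H ρ) :
    ∃ ρ', IsCharacterOn H ρ' ∧ ∀ h ∈ H, mEval h ρ * mEval h ρ' = 1 := by
  obtain ⟨C0, hC0, hHC⟩ := hHcl.2
  have hHz : ZClosed H := hHC ▸ zclosed_inter hC0 hM.zclosed
  have hnz : ∀ h ∈ H, mEval h ρ ≠ 0 := by
    intro h hh
    obtain ⟨b, hb, hab, _⟩ := hH.2.2.2 h hh
    have := hρ.map_mul h hh b hb
    rw [hab, hρ.map_one] at this
    intro h0
    rw [h0, zero_mul] at this
    exact one_ne_zero this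
  obtain ⟨ρ', hρ'⟩ := exists_inv_on hHz ρ hnz
  have h1H : (1 : Mat k n) ∈ H := hH.2.1
  refine ⟨ρ', ⟨?_, ?_⟩, hρ'⟩
  · have := hρ' 1 h1H
    rw [hρ.map_one, one_mul] at this
    exact this
  · intro a ha b hb
    have hab : a * b ∈ H := hH.2.2.1 a ha b hb
    have e1 := hρ' (a * b) hab
    have e2 := hρ' a ha
    have e3 := hρ' b hb
    have e4 := hρ.map_mul a ha b hb
    -- mEval (a*b) ρ' = mEval a ρ' * mEval b ρ'
    have hne : mEval (a * b) ρ ≠ 0 := hnz _ hab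
    apply mul_left_cancel₀ hne
    rw [e1, e4]
    calc (1 : k) = (mEval a ρ * mEval a ρ') * (mEval b ρ * mEval b ρ') := by
          rw [e2, e3, one_mul]
      _ = mEval a ρ * mEval b ρ * (mEval a ρ' * mEval b ρ') := by ring

/-- observability implies extendible characters have extendible inverses (A → B). -/
lemma obs_inv {M H : Set (Mat k n)} (hM : IsAlgMonoid M) (hMirr : IrreducibleSet M)
    (hH : IsSubgroupOf H (unitGroup M)) (hHcl : IsClosedIn H M)
    (hobs : LeftObservable H M) :
    ∀ ρ : MPoly k n, IsCharacterOn H ρ → Extendible M H ρ →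
      ∃ ρ' : MPoly k n, IsCharacterOn H ρ' ∧
        (∀ h ∈ H, mEval h ρ * mEval h ρ' = 1) ∧ Extendible M H ρ' := by
  intro ρ hρchar hρext
  obtain ⟨f, hfnv, hfsemi⟩ := hρext
  have hHM : H ⊆ M := hHcl.1
  set J : Ideal (MPoly k n) := vI M ⊔ Ideal.span {f} with hJ
  have hmemJ : ∀ p ∈ J, ∃ i ∈ vI M, ∃ g : MPoly k n, p = i + g * f := by
    intro p hp
    rw [hJ] at hp
    obtain ⟨i, hi, b, hb, hab⟩ := Submodule.mem_sup.mp hp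
    obtain ⟨g, hg⟩ := Ideal.mem_span_singleton'.mp hb
    exact ⟨i, hi, g, by rw [← hab, hg]⟩
  have hJ1 : ∀ p : MPoly k n, VanishesOn M p → p ∈ J := fun p hp =>
    Ideal.mem_sup_left (mem_vI.mpr hp)
  have hJ2 : ∀ p ∈ J, ∀ h ∈ H, ∃ p' ∈ J, ∀ m ∈ M, mEval m p' = mEval (h * m) p := by
    intro p hp h hh
    obtain ⟨i, hi, g, rfl⟩ := hmemJ p hp
    refine ⟨C (mEval h ρ) * (lT h g * f), ?_, ?_⟩
    · exact Ideal.mul_mem_left _ _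
        (Ideal.mem_sup_right (Ideal.mem_span_singleton'.mpr ⟨lT h g, rfl⟩))
    · intro m hm
      have hhm : h * m ∈ M := hM.mul_mem h (hHM hh) m hm
      rw [mEval_mul, mEval_C, mEval_mul, mEval_lT]
      rw [mEval_add, mEval_mul]
      rw [mem_vI] at hi
      rw [hi (h * m) hhm, zero_add]
      rw [hfsemi h hh m hm]
      ring
  have hJ3 : ∃ p ∈ J, ¬ VanishesOn M p :=
    ⟨f, Ideal.mem_sup_right (Ideal.subset_span rfl), hfnv⟩
  obtain ⟨p, hpJ, hpnv, hpinv⟩ := hobs J hJ1 hJ2 hJ3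
  obtain ⟨i, hi, g, rfl⟩ := hmemJ p hpJ
  rw [mem_vI] at hi
  -- pointwise: ρ(h) g(hm) f(m) = g(m) f(m) on M
  have hkey : ∀ h ∈ H, ∀ m ∈ M, mEval h ρ * mEval (h * m) g = mEval m g := by
    intro h hh
    have hq : VanishesOn M (((mEval h ρ) • lT h g - g) * f) := by
      intro m hm
      have hhm : h * m ∈ M := hM.mul_mem h (hHM hh) m hm
      have := hpinv h hh m hm
      rw [mEval_add, mEval_add, mEval_mul, mEval_mul, hi _ hhm, hi _ hm,
        zero_add, zero_add, hfsemi h hh m hm] at this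
      rw [mEval_mul, show mEval m ((mEval h ρ) • lT h g - g)
          = mEval h ρ * mEval (h * m) g - mEval m g from by
        rw [mEval_sub, mEval_smul, mEval_lT]]
      rw [sub_mul]
      rw [show mEval h ρ * mEval (h * m) g * mEval m f = mEval (h * m) g * (mEval h ρ * mEval m f) from by ring]
      rw [← this]
      ring
    rcases hMirr.2 _ f hq with hv | hv
    · intro m hm
      have := hv m hm
      rw [show mEval m ((mEval h ρ) • lT h g - g)
          = mEval h ρ * mEval (h * m) g - mEval m g from by
        rw [mEval_sub, mEval_smul, mEval_lT]] at this
      exact sub_eq_zero.mp this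
    · exact absurd hv hfnv
  -- g does not vanish on M
  have hgnv : ¬ VanishesOn M g := by
    intro hv
    apply hpnv
    intro m hm
    rw [mEval_add, mEval_mul, hi m hm, hv m hm, zero_add, zero_mul]
  obtain ⟨ρ', hρ'char, hρ'inv⟩ := inv_char hM hH hHcl ρ hρchar
  refine ⟨ρ', hρ'char, hρ'inv, g, hgnv, ?_⟩
  intro h hh m hm
  have := hkey h hh m hm
  have hinv := hρ'inv h hh
  calc mEval (h * m) g = (mEval h ρ * mEval h ρ') * mEval (h * m) g := by rw [hinv, one_mul]
    _ = mEval h ρ' * (mEval h ρ * mEval (h * m) g) := by ring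
    _ = mEval h ρ' * mEval m g := by rw [this]

/-- The converse: the character condition implies observability. -/
lemma obs_of_cond {M H : Set (Mat k n)} (hM : IsAlgMonoid M) (hMirr : IrreducibleSet M)
    (hH : IsSubgroupOf H (unitGroup M)) (hHcl : IsClosedIn H M)
    (cond : ∀ ρ : MPoly k n, IsCharacterOn H ρ → Extendible M H ρ →
      ∃ ρ' : MPoly k n, IsCharacterOn H ρ' ∧
        (∀ h ∈ H, mEval h ρ * mEval h ρ' = 1) ∧ Extendible M H ρ') :
    LeftObservable H M := by
  classical
  intro J hJ1 hJ2 hJ3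
  obtain ⟨p₀, hp₀J, hp₀nv⟩ := hJ3
  have hHM : H ⊆ M := hHcl.1
  have hH1 : (1 : Mat k n) ∈ H := hH.2.1
  have hHmul := hH.2.2.1
  set ST : Set (↥M → k) := {g | ∃ h ∈ H, g = evM M (lT h p₀)} with hST
  set V : Submodule k (↥M → k) := Submodule.span k ST with hV
  obtain ⟨D, cc, dd, hcd⟩ := comul p₀
  have hVle : V ≤ Submodule.span k (Set.range (fun α => evM M (dd α))) := by
    rw [hV]
    apply Submodule.span_le.mpr
    rintro g ⟨h, hh, rfl⟩
    have hgen : evM M (lT h p₀) = ∑ α, (mEval h (cc α)) • evM M (dd α) := by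
      funext m
      simp only [Finset.sum_apply, Pi.smul_apply, smul_eq_mul, evM_apply]
      rw [mEval_lT, hcd]
    rw [hgen]
    exact Submodule.sum_mem _ (fun α _ => Submodule.smul_mem _ _
      (Submodule.subset_span (Set.mem_range_self α)))
  have hfd0 : FiniteDimensional k (Submodule.span k (Set.range (fun α => evM M (dd α)))) :=
    FiniteDimensional.span_of_finite k (Set.finite_range _)
  have hVfd : FiniteDimensional k V := Submodule.finiteDimensional_of_le hVle
  set d := Module.finrank k V with hd
  set b : Module.Basis (Fin d) k V := Module.finBasis k V with hb
  have hrep : ∀ g ∈ ST, ∃ p' ∈ J, evM M p' = g := by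
    rintro g ⟨h, hh, rfl⟩
    obtain ⟨p', hp'J, hp'⟩ := hJ2 p₀ hp₀J h hh
    refine ⟨p', hp'J, ?_⟩
    funext m
    rw [evM_apply, evM_apply, mEval_lT]
    exact hp' m m.2
  have hq : ∀ i : Fin d, ∃ p' ∈ J, evM M p' = (b i : ↥M → k) := by
    intro i
    have hbi : ((b i : V) : ↥M → k) ∈ V := (b i).2
    have hbi' : ((b i : V) : ↥M → k) ∈ Submodule.span k ST := hbi
    obtain ⟨N, f, g, hsum⟩ := Submodule.mem_span_set'.mp hbi'
    have hPs : ∀ j : Fin N, ∃ p' ∈ J, evM M p' = (g j : ↥M → k) :=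
      fun j => hrep _ (g j).2
    choose P hPJ hPev using hPs
    refine ⟨∑ j, C (f j) * P j, Ideal.sum_mem J (fun j _ => Ideal.mul_mem_left _ _ (hPJ j)), ?_⟩
    rw [← hsum]
    funext m
    rw [evM_apply, mEval_sum]
    simp only [Finset.sum_apply, Pi.smul_apply, smul_eq_mul]
    apply Finset.sum_congr rfl
    intro j _
    rw [mEval_mul, mEval_C, ← evM_apply M (P j), hPev j]
  choose q hqJ hqb using hq
  have hqfun : (fun i => evM M (q i)) = fun i => ((b i : V) : ↥M → k) :=
    funext hqb
  have hind : LinearIndependent k (fun i => evM M (q i)) := by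
    rw [hqfun]
    exact b.linearIndependent.map' V.subtype (Submodule.ker_subtype V)
  have hspan : Submodule.span k (Set.range (fun i => evM M (q i))) = V := by
    rw [hqfun]
    have : Set.range (fun i => ((b i : V) : ↥M → k))
        = V.subtype '' (Set.range b) := by
      rw [← Set.range_comp]; rfl
    rw [this, Submodule.span_image, b.span_eq, Submodule.map_subtype_top]
  -- left translation operator on functions
  have hLtr : ∀ h ∈ M, ∃ L : (↥M → k) →ₗ[k] (↥M → k),
      ∀ p : MPoly k n, L (evM M p) = evM M (lT h p) := by
    intro h hhM
    refine ⟨{ toFun := fun g => fun m => g ⟨h * ↑m, hM.mul_mem h hhM ↑m m.2⟩,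
              map_add' := fun g1 g2 => rfl,
              map_smul' := fun c g => by funext m; simp }, fun p => ?_⟩
    funext m
    simp only [LinearMap.coe_mk, AddHom.coe_mk]
    rw [evM_apply, evM_apply, mEval_lT]
  have hstab : ∀ h ∈ H, ∀ i, evM M (lT h (q i)) ∈
      Submodule.span k (Set.range (fun i => evM M (q i))) := by
    intro h hh i
    rw [hspan]
    obtain ⟨L, hL⟩ := hLtr h (hHM hh)
    rw [← hL]
    have hmap : Submodule.map L V ≤ V := by
      rw [hV, Submodule.map_span]
      apply Submodule.span_le.mpr
      rintro g ⟨g', ⟨h', hh', rfl⟩, rfl⟩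
      apply Submodule.subset_span
      refine ⟨h' * h, hHmul h' hh' h hh, ?_⟩
      rw [hL (lT h' p₀)]
      funext m
      rw [evM_apply, evM_apply, mEval_lT, mEval_lT, mEval_lT, mul_assoc]
    apply hmap
    apply Submodule.mem_map_of_mem
    rw [hqb i]
    exact (b i).2
  obtain ⟨pts, A, χ, u, hptsM, hFunit, hREL, hχval, hχchar, hunv, huext⟩ :=
    repdata hM hHM hH1 hHmul q hind hstab
  obtain ⟨ρ', hρ'char, hρρ', F', hF'nv, hF'ext⟩ := cond χ hχchar ⟨u, hunv, huext⟩
  obtain ⟨ms, hmsM, hmsp₀, mi, hmiM, hmsmi, hmims⟩ := exists_unit_point hM hMirr p₀ hp₀nv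
  set vstar : Fin d → k := fun i => mEval ms (q i) with hvstar
  have hvstar_ne : vstar ≠ 0 := by
    have hp₀V : evM M p₀ ∈ V := by
      have : evM M p₀ = evM M (lT 1 p₀) := by
        funext m
        rw [evM_apply, evM_apply, mEval_lT, one_mul]
      rw [this]
      exact Submodule.subset_span ⟨1, hH1, rfl⟩
    rw [← hspan] at hp₀V
    obtain ⟨γ, hγ⟩ := (Submodule.mem_span_range_iff_exists_fun k).mp hp₀V
    intro h0
    apply hmsp₀
    have := congrFun hγ ⟨ms, hmsM⟩
    simp only [Finset.sum_apply, Pi.smul_apply, smul_eq_mul, evM_apply] at this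
    rw [← this]
    apply Finset.sum_eq_zero
    intro i _
    have : vstar i = 0 := by rw [h0]; rfl
    rw [hvstar] at this
    simp only at this
    rw [this, mul_zero]
  set F : Matrix (Fin d) (Fin d) k := Matrix.of fun i j => mEval (pts j) (q i) with hF
  set c : Fin d → k := (F⁻¹).mulVec vstar with hc
  have hFc : F.mulVec c = vstar := by
    rw [hc, Matrix.mulVec_mulVec, Matrix.mul_nonsing_inv F hFunit, Matrix.one_mulVec]
  have hcne : c ≠ 0 := by
    intro h0
    rw [h0, Matrix.mulVec_zero] at hFc
    exact hvstar_ne hFc.symm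
  obtain ⟨j₀, hj₀⟩ := Function.ne_iff.mp hcne
  set z : Fin d → Mat k n := fun j => mi * pts j with hz
  have hzM : ∀ j, z j ∈ M := fun j => hM.mul_mem mi hmiM _ (hptsM j)
  set P : Matrix (Fin d) (Fin d) (MPoly k n) :=
    Matrix.of fun i j => if j = j₀ then q i else rT (z j) (q i) with hP
  set w : MPoly k n := P.det with hw
  have hwJ : w ∈ J := by
    apply det_mem_ideal J P j₀
    intro i
    rw [hP]
    simp only [Matrix.of_apply, if_pos rfl]
    exact hqJ i
  have hwval : ∀ x : Mat k n, mEval x w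
      = (Matrix.of fun i j => if j = j₀ then mEval x (q i) else mEval (x * z j) (q i)).det := by
    intro x
    rw [hw, ← mEvalHom_apply, RingHom.map_det]
    congr 1
    funext i j
    simp only [RingHom.mapMatrix_apply, Matrix.map_apply, Matrix.of_apply, hP]
    rw [apply_ite (mEvalHom x), mEvalHom_apply, mEvalHom_apply, mEval_rT]
  have hsemi : ∀ h ∈ H, ∀ m ∈ M, mEval (h * m) w = mEval h χ * mEval m w := by
    intro h hh m hm
    rw [hwval, hwval, hχval h hh]
    have hmat : (Matrix.of fun i j => if j = j₀ then mEval (h * m) (q i)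
          else mEval ((h * m) * z j) (q i))
        = A h * (Matrix.of fun i j => if j = j₀ then mEval m (q i)
          else mEval (m * z j) (q i)) := by
      funext i j
      rw [Matrix.mul_apply]
      simp only [Matrix.of_apply]
      by_cases hj : j = j₀
      · simp only [if_pos hj]
        rw [hREL h hh i m hm]
      · simp only [if_neg hj]
        rw [mul_assoc, hREL h hh i (m * z j) (hM.mul_mem m hm _ (hzM j))]
    rw [hmat, Matrix.det_mul]
  have hwnv : ¬ VanishesOn M w := by
    intro hv
    have hvms := hv ms hmsM
    rw [hwval] at hvms
    have hmat : (Matrix.of fun i j => if j = j₀ then mEval ms (q i)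
        else mEval (ms * z j) (q i)) = F.updateCol j₀ vstar := by
      funext i j
      rw [Matrix.updateCol_apply]
      simp only [Matrix.of_apply]
      by_cases hj : j = j₀
      · simp [hj, hvstar]
      · simp only [if_neg hj]
        rw [hz]
        simp only
        rw [← mul_assoc, hmsmi, one_mul]
        rw [hF]
        simp
    rw [hmat] at hvms
    have hvs_eq : vstar = fun r => ∑ i, c i • F r i := by
      funext r
      rw [← hFc]
      simp only [Matrix.mulVec, dotProduct, smul_eq_mul]
      apply Finset.sum_congr rfl
      intro i _
      ring
    rw [hvs_eq] at hvms
    rw [Matrix.det_updateCol_sum F j₀ c] at hvms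
    rw [smul_eq_mul] at hvms
    rcases mul_eq_zero.mp hvms with h0 | h0
    · exact hj₀ h0
    · exact hFunit.ne_zero h0
  refine ⟨w * F', Ideal.mul_mem_right F' J hwJ, ?_, ?_⟩
  · intro hv
    rcases hMirr.2 w F' hv with h0 | h0
    · exact hwnv h0
    · exact hF'nv h0
  · intro h hh m hm
    rw [mEval_mul, mEval_mul, hsemi h hh m hm, hF'ext h hh m hm]
    calc mEval h χ * mEval m w * (mEval h ρ' * mEval m F')
        = (mEval h χ * mEval h ρ') * (mEval m w * mEval m F') := by ring
      _ = mEval m w * mEval m F' := by rw [hρρ' h hh, one_mul]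

/-- Observability implies that every character of `H` extends to `M` (A → C). -/
lemma extend_all {M H : Set (Mat k n)} (hM : IsAlgMonoid M) (hMirr : IrreducibleSet M)
    (hH : IsSubgroupOf H (unitGroup M)) (hHcl : IsClosedIn H M)
    (hobs : LeftObservable H M) :
    ∀ χ : MPoly k n, IsCharacterOn H χ → Extendible M H χ := by
  classical
  intro χ hχ
  have hHM : H ⊆ M := hHcl.1
  have hH1 : (1 : Mat k n) ∈ H := hH.2.1
  have hHmul := hH.2.2.1
  set ST : Set (↥M → k) := {g | ∃ h ∈ H, g = evM M (lT h χ)} with hST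
  set V : Submodule k (↥M → k) := Submodule.span k ST with hV
  obtain ⟨D, cc, dd, hcd⟩ := comul χ
  have hVle : V ≤ Submodule.span k (Set.range (fun α => evM M (dd α))) := by
    rw [hV]
    apply Submodule.span_le.mpr
    rintro g ⟨h, hh, rfl⟩
    have hgen : evM M (lT h χ) = ∑ α, (mEval h (cc α)) • evM M (dd α) := by
      funext m
      simp only [Finset.sum_apply, Pi.smul_apply, smul_eq_mul, evM_apply]
      rw [mEval_lT, hcd]
    rw [hgen]
    exact Submodule.sum_mem _ (fun α _ => Submodule.smul_mem _ _
      (Submodule.subset_span (Set.mem_range_self α)))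
  have hfd0 : FiniteDimensional k (Submodule.span k (Set.range (fun α => evM M (dd α)))) :=
    FiniteDimensional.span_of_finite k (Set.finite_range _)
  have hVfd : FiniteDimensional k V := Submodule.finiteDimensional_of_le hVle
  -- restriction to H
  set resH : (↥M → k) →ₗ[k] (↥H → k) :=
    { toFun := fun g => fun x => g ⟨↑x, hHM x.2⟩,
      map_add' := fun g1 g2 => rfl,
      map_smul' := fun c g => rfl } with hresH
  set r₀ : ↥H → k := resH (evM M χ) with hr₀def
  have hr₀ : r₀ ≠ 0 := by
    intro h0
    have := congrFun h0 ⟨1, hH1⟩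
    rw [hr₀def] at this
    simp only [hresH, LinearMap.coe_mk, AddHom.coe_mk, evM_apply, Pi.zero_apply] at this
    rw [hχ.map_one] at this
    exact one_ne_zero this
  have hres_gen : ∀ h ∈ H, resH (evM M (lT h χ)) = (mEval h χ) • r₀ := by
    intro h hh
    funext x
    simp only [hresH, hr₀def, LinearMap.coe_mk, AddHom.coe_mk, Pi.smul_apply, smul_eq_mul,
      evM_apply]
    rw [mEval_lT]
    exact hχ.map_mul h hh ↑x x.2
  have hresV : ∀ v ∈ V, ∃ c : k, resH v = c • r₀ := by
    intro v hv
    have : resH v ∈ Submodule.map resH V := Submodule.mem_map_of_mem hv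
    have hle : Submodule.map resH V ≤ Submodule.span k {r₀} := by
      rw [hV, Submodule.map_span]
      apply Submodule.span_le.mpr
      rintro g ⟨g', ⟨h, hh, rfl⟩, rfl⟩
      rw [hres_gen h hh]
      exact Submodule.smul_mem _ _ (Submodule.subset_span rfl)
    obtain ⟨c, hc⟩ := Submodule.mem_span_singleton.mp (hle this)
    exact ⟨c, hc.symm⟩
  set W : Submodule k (↥M → k) := V ⊓ LinearMap.ker resH with hW
  have hWfd : FiniteDimensional k W := Submodule.finiteDimensional_of_le
    (le_trans inf_le_left hVle)
  set e := Module.finrank k W with he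
  set wb : Module.Basis (Fin e) k W := Module.finBasis k W with hwb
  -- polynomial representatives
  have hwqex : ∀ i : Fin e, ∃ p', evM M p' = ((wb i : W) : ↥M → k) := by
    intro i
    have hmem : ((wb i : W) : ↥M → k) ∈ Submodule.span k ST :=
      (le_trans inf_le_left (le_of_eq hV.symm) : W ≤ Submodule.span k ST) (wb i).2
    obtain ⟨N, f, g, hsum⟩ := Submodule.mem_span_set'.mp hmem
    have hgs : ∀ j : Fin N, ∃ h ∈ H, (g j : ↥M → k) = evM M (lT h χ) := fun j => (g j).2
    choose hs hhs hgs using hgs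
    refine ⟨∑ j, C (f j) * lT (hs j) χ, ?_⟩
    rw [← hsum]
    funext m
    rw [evM_apply, mEval_sum]
    simp only [Finset.sum_apply, Pi.smul_apply, smul_eq_mul]
    apply Finset.sum_congr rfl
    intro j _
    rw [mEval_mul, mEval_C, hgs j, evM_apply]
  choose wq hwq using hwqex
  have hindW : LinearIndependent k (fun i => evM M (wq i)) := by
    rw [funext hwq]
    exact wb.linearIndependent.map' W.subtype (Submodule.ker_subtype W)
  have hspanW : Submodule.span k (Set.range (fun i => evM M (wq i))) = W := by
    rw [funext hwq]
    have : Set.range (fun i => ((wb i : W) : ↥M → k)) = W.subtype '' (Set.range wb) := by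
      rw [← Set.range_comp]; rfl
    rw [this, Submodule.span_image, wb.span_eq, Submodule.map_subtype_top]
  have hχV : evM M χ ∈ V := by
    have : evM M χ = evM M (lT 1 χ) := by
      funext m
      rw [evM_apply, evM_apply, mEval_lT, one_mul]
    rw [this]
    exact Submodule.subset_span ⟨1, hH1, rfl⟩
  have hnotin : evM M χ ∉ Submodule.span k (Set.range (fun i => evM M (wq i))) := by
    rw [hspanW]
    intro hmem
    apply hr₀
    rw [hr₀def]
    have : resH (evM M χ) = 0 := LinearMap.mem_ker.mp (hmem.2)
    exact this
  set qV : Fin (e+1) → MPoly k n := Fin.cons χ wq with hqV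
  have hev_cons : (fun i => evM M (qV i)) = Fin.cons (evM M χ) (fun i => evM M (wq i)) := by
    funext i
    refine Fin.cases ?_ ?_ i
    · simp [hqV]
    · intro i'
      simp [hqV]
  have hindV : LinearIndependent k (fun i => evM M (qV i)) := by
    rw [hev_cons]
    exact linearIndependent_fin_cons.mpr ⟨hindW, hnotin⟩
  have hWleV : W ≤ V := inf_le_left
  have hVdecomp : Submodule.span k (Set.range (fun i => evM M (qV i))) = V := by
    apply le_antisymm
    · apply Submodule.span_le.mpr
      rintro g ⟨i, rfl⟩
      refine Fin.cases ?_ ?_ i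
      · simpa [hqV] using hχV
      · intro i'
        show evM M (qV i'.succ) ∈ (V : Set (↥M → k))
        have h1 : evM M (qV i'.succ) = ((wb i' : W) : ↥M → k) := by
          rw [hqV]; simp [hwq i']
        rw [h1]
        exact hWleV (wb i').2
    · rw [hV]
      apply Submodule.span_le.mpr
      rintro g ⟨h, hh, rfl⟩
      obtain ⟨c, hc⟩ := hresV (evM M (lT h χ)) (Submodule.subset_span ⟨h, hh, rfl⟩)
      have hwmem : evM M (lT h χ) - c • evM M χ ∈ W := by
        constructor
        · exact Submodule.sub_mem V (Submodule.subset_span ⟨h, hh, rfl⟩)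
            (Submodule.smul_mem V c hχV)
        · show resH (evM M (lT h χ) - c • evM M χ) = 0
          rw [map_sub, map_smul, hc, hr₀def, sub_self]
      rw [← hspanW] at hwmem
      have : evM M (lT h χ) = c • evM M χ + (evM M (lT h χ) - c • evM M χ) := by abel
      rw [this]
      apply Submodule.add_mem
      · apply Submodule.smul_mem
        apply Submodule.subset_span
        exact ⟨0, by simp [hqV]⟩
      · refine Submodule.span_mono ?_ hwmem
        rintro g ⟨i, hg⟩
        refine ⟨i.succ, ?_⟩
        rw [← hg]
        simp [hqV, hwq i]
  -- translation operators
  have hLtr : ∀ h ∈ M, ∃ L : (↥M → k) →ₗ[k] (↥M → k),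
      ∀ p : MPoly k n, L (evM M p) = evM M (lT h p) := by
    intro h hhM
    refine ⟨{ toFun := fun g => fun m => g ⟨h * ↑m, hM.mul_mem h hhM ↑m m.2⟩,
              map_add' := fun g1 g2 => rfl,
              map_smul' := fun c g => by funext m; simp }, fun p => ?_⟩
    funext m
    simp only [LinearMap.coe_mk, AddHom.coe_mk]
    rw [evM_apply, evM_apply, mEval_lT]
  have hmapV : ∀ h ∈ H, ∀ L : (↥M → k) →ₗ[k] (↥M → k),
      (∀ p : MPoly k n, L (evM M p) = evM M (lT h p)) → Submodule.map L V ≤ V := by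
    intro h hh L hL
    rw [hV, Submodule.map_span]
    apply Submodule.span_le.mpr
    rintro g ⟨g', ⟨h', hh', rfl⟩, rfl⟩
    apply Submodule.subset_span
    refine ⟨h' * h, hHmul h' hh' h hh, ?_⟩
    rw [hL (lT h' χ)]
    funext m
    rw [evM_apply, evM_apply, mEval_lT, mEval_lT, mEval_lT, mul_assoc]
  have hstabV : ∀ h ∈ H, ∀ i, evM M (lT h (qV i)) ∈
      Submodule.span k (Set.range (fun i => evM M (qV i))) := by
    intro h hh i
    rw [hVdecomp]
    obtain ⟨L, hL⟩ := hLtr h (hHM hh)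
    rw [← hL]
    apply hmapV h hh L hL
    apply Submodule.mem_map_of_mem
    have : evM M (qV i) ∈ Submodule.span k (Set.range (fun i => evM M (qV i))) :=
      Submodule.subset_span (Set.mem_range_self i)
    rw [hVdecomp] at this
    exact this
  have hstabW : ∀ h ∈ H, ∀ i, evM M (lT h (wq i)) ∈
      Submodule.span k (Set.range (fun i => evM M (wq i))) := by
    intro h hh i
    rw [hspanW]
    constructor
    · obtain ⟨L, hL⟩ := hLtr h (hHM hh)
      rw [← hL]
      apply hmapV h hh L hL
      apply Submodule.mem_map_of_mem
      rw [hwq i]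
      exact hWleV (wb i).2
    · show resH (evM M (lT h (wq i))) = 0
      have hmem : evM M (wq i) ∈ W := by rw [hwq i]; exact (wb i).2
      have hker0 : resH (evM M (wq i)) = 0 := LinearMap.mem_ker.mp hmem.2
      funext x
      have hx' : h * ↑x ∈ H := hHmul h hh ↑x x.2
      have hv := congrFun hker0 ⟨h * ↑x, hx'⟩
      simp only [hresH, LinearMap.coe_mk, AddHom.coe_mk, Pi.zero_apply, evM_apply] at hv ⊢
      rw [mEval_lT]
      exact hv
  obtain ⟨ptsV, AV, χV, uV, hptsV, hFV, hRELV, hχVval, hχVchar, hunvV, huextV⟩ :=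
    repdata hM hHM hH1 hHmul qV hindV hstabV
  obtain ⟨ptsW, AW, χW, uW, hptsW, hFW, hRELW, hχWval, hχWchar, hunvW, huextW⟩ :=
    repdata hM hHM hH1 hHmul wq hindW hstabW
  -- block structure: χV = χ · χW on H
  have hblock : ∀ h ∈ H, mEval h χV = mEval h χ * mEval h χW := by
    intro h hh
    have hwmem : evM M (lT h χ) - (mEval h χ) • evM M χ ∈
        Submodule.span k (Set.range (fun i => evM M (wq i))) := by
      rw [hspanW]
      constructor
      · exact Submodule.sub_mem V (Submodule.subset_span ⟨h, hh, rfl⟩)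
          (Submodule.smul_mem V _ hχV)
      · show resH (evM M (lT h χ) - (mEval h χ) • evM M χ) = 0
        rw [map_sub, map_smul, hres_gen h hh, hr₀def, sub_self]
    obtain ⟨t, ht⟩ := (Submodule.mem_span_range_iff_exists_fun k).mp hwmem
    set B : Matrix (Fin (e+1)) (Fin (e+1)) k :=
      Matrix.of (Fin.cases (Fin.cons (mEval h χ) t) (fun i' => Fin.cons 0 (AW h i'))) with hB
    have hB00 : B 0 0 = mEval h χ := by simp [hB]
    have hB0s : ∀ j : Fin e, B 0 j.succ = t j := by intro j; simp [hB]
    have hBs0 : ∀ i : Fin e, B i.succ 0 = 0 := by intro i; simp [hB]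
    have hBss : ∀ i j : Fin e, B i.succ j.succ = AW h i j := by intro i j; simp [hB]
    have hqV0 : qV 0 = χ := by simp [hqV]
    have hqVs : ∀ i : Fin e, qV i.succ = wq i := by intro i; simp [hqV]
    have hRELB : ∀ i, ∀ m ∈ M, mEval (h * m) (qV i) = ∑ j, B i j * mEval m (qV j) := by
      intro i m hm
      rw [Fin.sum_univ_succ]
      refine Fin.cases ?_ ?_ i
      · rw [hqV0, hB00]
        have hsum : ∑ j : Fin e, B 0 j.succ * mEval m (qV j.succ)
            = ∑ j : Fin e, t j * mEval m (wq j) := by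
          apply Finset.sum_congr rfl
          intro j _
          rw [hB0s j, hqVs j]
        rw [hsum]
        have := congrFun ht ⟨m, hm⟩
        simp only [Finset.sum_apply, Pi.smul_apply, smul_eq_mul, Pi.sub_apply,
          evM_apply] at this
        rw [mEval_lT] at this
        rw [hqV0] at *
        rw [this]
        ring
      · intro i'
        rw [hqVs i', hqV0, hBs0 i', zero_mul, zero_add]
        have hsum : ∑ j : Fin e, B i'.succ j.succ * mEval m (qV j.succ)
            = ∑ j : Fin e, AW h i' j * mEval m (wq j) := by
          apply Finset.sum_congr rfl
          intro j _
          rw [hBss i' j, hqVs j]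
        rw [hsum]
        exact hRELW h hh i' m hm
    have hAVB : AV h = B := by
      apply rel_unique qV hindV
      intro i m hm
      rw [← hRELV h hh i m hm, ← hRELB i m hm]
    have hdetB : B.det = mEval h χ * (AW h).det := by
      rw [Matrix.det_succ_column_zero]
      rw [Fin.sum_univ_succ]
      have hzero : ∑ i : Fin e, (-1 : k) ^ ((i.succ : Fin (e+1)) : ℕ) * B i.succ 0
          * (B.submatrix (Fin.succAbove i.succ) Fin.succ).det = 0 := by
        apply Finset.sum_eq_zero
        intro i _
        rw [hBs0 i, mul_zero, zero_mul]
      rw [hzero, add_zero, hB00]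
      have hsub : B.submatrix (Fin.succAbove 0) Fin.succ = AW h := by
        funext i j
        rw [Matrix.submatrix_apply, Fin.succAbove_zero, hBss i j]
      rw [hsub]
      simp
    rw [hχVval h hh, hχWval h hh, hAVB, hdetB]
  -- inverse of χW via observability
  obtain ⟨ρ', hρ'char, hρ'inv, F', hF'nv, hF'ext⟩ :=
    obs_inv hM hMirr hH hHcl hobs χW hχWchar ⟨uW, hunvW, huextW⟩
  refine ⟨uV * F', ?_, ?_⟩
  · intro hv
    rcases hMirr.2 uV F' hv with h0 | h0
    · exact hunvV h0
    · exact hF'nv h0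
  · intro h hh m hm
    rw [mEval_mul, mEval_mul, huextV h hh m hm, hF'ext h hh m hm, hblock h hh]
    calc mEval h χ * mEval h χW * mEval m uV * (mEval h ρ' * mEval m F')
        = (mEval h χW * mEval h ρ') * (mEval h χ * (mEval m uV * mEval m F')) := by ring
      _ = mEval h χ * (mEval m uV * mEval m F') := by rw [hρ'inv h hh, one_mul]

-- MAIN THEOREM BELOW
/-- Let `M` be an irreducible affine algebraic monoid with unit group
`G` and let `H ⊆ G` be a subgroup, closed in `M`.  The following are equivalent:
(1) `H` is observable in `M`; (2) `E_M(H)` is a group, i.e. for every `ρ ∈ E_M(H)`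
also `ρ⁻¹ ∈ E_M(H)`; (3) `E_M(H) = X(H)`, i.e. every rational character of `H` is
extendible to `M`. -/
theorem observable_in_monoid_iff_extendible_group_iff_all_characters_extend
    {k : Type} [Field k] [IsAlgClosed k] {n : ℕ}
    (M H : Set (Mat k n)) (hM : IsAlgMonoid M) (hMirr : IrreducibleSet M)
    (hH : IsSubgroupOf H (unitGroup M)) (hHcl : IsClosedIn H M) :
    (LeftObservable H M ↔
      ∀ ρ : MPoly k n, IsCharacterOn H ρ → Extendible M H ρ →
        ∃ ρ' : MPoly k n, IsCharacterOn H ρ' ∧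
          (∀ h ∈ H, mEval h ρ * mEval h ρ' = 1) ∧ Extendible M H ρ') ∧
    (LeftObservable H M ↔
      ∀ ρ : MPoly k n, IsCharacterOn H ρ → Extendible M H ρ) := by
  constructor
  · constructor
    · exact obs_inv hM hMirr hH hHcl
    · intro hB
      exact obs_of_cond hM hMirr hH hHcl hB
  · constructor
    · intro hobs ρ hρchar
      exact extend_all hM hMirr hH hHcl hobs ρ hρchar
    · intro hC
      apply obs_of_cond hM hMirr hH hHcl
      intro ρ hρchar hρext
      obtain ⟨ρ', hρ'char, hinv⟩ := inv_char hM hH hHcl ρ hρchar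
      exact ⟨ρ', hρ'char, hinv, hC ρ' hρ'char⟩

end AlgebraicMonoid
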